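/- Let D₁, D₂ : (0,∞) → ℝ be nonnegative, nonincreasing, right-continuous functions with Dᵢ(s) → 0 as s → ∞, and let λ₁, λ₂ be their generalized inverses, λᵢ(t) = inf{ s > 0 : Dᵢ(s) ≤ t }. Then the Lebesgue integrals over (0,∞) satisfy ∫₀^∞ |λ₁(t) − λ₂(t)| dt = ∫₀^∞ |D₁(t) − D₂(t)| dt (as an equality in [0,∞]). -/

import Mathlib

open MeasureTheory Filter
open scoped ENNReal

open Set in
/-- Squeeze lemma: a set squeezed between `Ioo a b` and `Icc a b` (on `Ioi 0`)
has indicator integral `b - a` over `Ioi 0`, when `0 ≤ a ≤ b`. -/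
lemma stmt3_squeeze {a b : ℝ} (ha : 0 ≤ a) (hab : a ≤ b) {S : Set ℝ}
    (h1 : Ioo a b ⊆ S) (h2 : S ∩ Ioi 0 ⊆ Icc a b) :
    ∫⁻ x in Ioi (0:ℝ), S.indicator (fun _ => (1:ℝ≥0∞)) x = ENNReal.ofReal (b - a) := by
  have h0 : (volume : Measure ℝ) (Icc a b \ Ioo a b) = 0 := by
    refine measure_mono_null (fun x hx => ?_) (?_ : volume ({a, b} : Set ℝ) = 0)
    · rcases hx with ⟨⟨h1', h2'⟩, h3⟩
      rcases not_and_or.mp h3 with h | h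
      · exact Or.inl (le_antisymm (not_lt.mp h) h1')
      · exact Or.inr (le_antisymm h2' (not_lt.mp h))
    · exact ((Set.finite_singleton b).insert a).measure_zero volume
  have hae : S.indicator (fun _ => (1:ℝ≥0∞)) =ᵐ[volume.restrict (Ioi 0)]
      (Ioo a b).indicator (fun _ => (1:ℝ≥0∞)) := by
    rw [EventuallyEq, ae_restrict_iff' measurableSet_Ioi, ae_iff]
    refine measure_mono_null (fun x hx => ?_) h0
    simp only [mem_setOf_eq, not_forall] at hx
    obtain ⟨hx0, hne⟩ := hx
    by_cases hIoo : x ∈ Ioo a b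
    · exact absurd (by rw [indicator_of_mem hIoo, indicator_of_mem (h1 hIoo)]) hne
    by_cases hS : x ∈ S
    · exact ⟨h2 ⟨hS, hx0⟩, hIoo⟩
    · exact absurd (by rw [indicator_of_notMem hS, indicator_of_notMem hIoo]) hne
  have hsub : Ioo a b ∩ Ioi 0 = Ioo a b :=
    inter_eq_left.mpr fun x hx => lt_of_le_of_lt ha hx.1
  rw [lintegral_congr_ae hae, lintegral_indicator measurableSet_Ioo _, setLIntegral_one,
    Measure.restrict_apply measurableSet_Ioo, hsub, Real.volume_Ioo]

/-- Basic facts about the generalized inverse value. -/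
lemma stmt3_inv_facts {D : ℝ → ℝ} (hanti : AntitoneOn D (Set.Ioi 0))
    (hlim : Tendsto D atTop (nhds 0)) {t : ℝ} (ht : 0 < t) :
    0 ≤ sInf {s : ℝ | 0 < s ∧ D s ≤ t} ∧
    (∀ s, 0 < s → D s ≤ t → sInf {s : ℝ | 0 < s ∧ D s ≤ t} ≤ s) ∧
    (∀ s, 0 < s → t < D s → s ≤ sInf {s : ℝ | 0 < s ∧ D s ≤ t}) := by
  have hbdd : BddBelow {s : ℝ | 0 < s ∧ D s ≤ t} := ⟨0, fun x hx => hx.1.le⟩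
  have hne : {s : ℝ | 0 < s ∧ D s ≤ t}.Nonempty := by
    have h1 : ∀ᶠ s in atTop, D s < t := hlim.eventually_lt_const ht
    obtain ⟨s₀, hs₀, hs₀'⟩ := (h1.and (eventually_gt_atTop (0:ℝ))).exists
    exact ⟨s₀, hs₀', hs₀.le⟩
  refine ⟨Real.sInf_nonneg (fun x hx => hx.1.le), fun s hs hDs => csInf_le hbdd ⟨hs, hDs⟩,
    fun s hs hts => le_csInf hne fun s' hs' => ?_⟩
  by_contra h
  push_neg at h
  exact absurd (hs'.2) (not_le.mpr (lt_of_lt_of_le hts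
    (hanti (Set.mem_Ioi.mpr hs'.1) (Set.mem_Ioi.mpr hs) h.le)))

open Set in
/-- For two nonnegative, nonincreasing, right-continuous functions `D₁, D₂` on `(0,∞)`
vanishing at infinity, with generalized inverses `lam₁, lam₂`, the `L¹`-distances agree:
`∫₀^∞ |lam₁ - lam₂| = ∫₀^∞ |D₁ - D₂|` (as an equality in `[0,∞]`). -/
theorem stmt3 (D₁ D₂ : ℝ → ℝ)
    (hpos₁ : ∀ s, 0 < s → 0 ≤ D₁ s) (hpos₂ : ∀ s, 0 < s → 0 ≤ D₂ s)
    (hanti₁ : AntitoneOn D₁ (Set.Ioi 0)) (hanti₂ : AntitoneOn D₂ (Set.Ioi 0))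
    (hrc₁ : ∀ s, 0 < s → Tendsto D₁ (nhdsWithin s (Set.Ioi s)) (nhds (D₁ s)))
    (hrc₂ : ∀ s, 0 < s → Tendsto D₂ (nhdsWithin s (Set.Ioi s)) (nhds (D₂ s)))
    (hlim₁ : Tendsto D₁ atTop (nhds 0)) (hlim₂ : Tendsto D₂ atTop (nhds 0))
    (lam₁ lam₂ : ℝ → ℝ)
    (hlam₁ : ∀ t, 0 < t → lam₁ t = sInf {s : ℝ | 0 < s ∧ D₁ s ≤ t})
    (hlam₂ : ∀ t, 0 < t → lam₂ t = sInf {s : ℝ | 0 < s ∧ D₂ s ≤ t}) :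
    ∫⁻ t in Set.Ioi (0:ℝ), ENNReal.ofReal |lam₁ t - lam₂ t| =
      ∫⁻ t in Set.Ioi (0:ℝ), ENNReal.ofReal |D₁ t - D₂ t| := by
  classical
  set E : Set (ℝ × ℝ) := {p : ℝ × ℝ | ¬ ((p.1 < D₁ p.2) ↔ (p.1 < D₂ p.2))} with hE
  set F : ℝ → ℝ → ℝ≥0∞ := fun t s => E.indicator (fun _ => (1:ℝ≥0∞)) (t, s) with hF
  set ν : Measure ℝ := volume.restrict (Ioi 0) with hν
  -- measurability of F (as an uncurried function) w.r.t. product measure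
  obtain ⟨g₁, hg₁m, hg₁⟩ := aemeasurable_restrict_of_antitoneOn (μ := volume) measurableSet_Ioi hanti₁
  obtain ⟨g₂, hg₂m, hg₂⟩ := aemeasurable_restrict_of_antitoneOn (μ := volume) measurableSet_Ioi hanti₂
  set E' : Set (ℝ × ℝ) := {p : ℝ × ℝ | ¬ ((p.1 < g₁ p.2) ↔ (p.1 < g₂ p.2))} with hE'
  have hP₁ : MeasurableSet {p : ℝ × ℝ | p.1 < g₁ p.2} :=
    measurableSet_lt measurable_fst (hg₁m.comp measurable_snd)
  have hP₂ : MeasurableSet {p : ℝ × ℝ | p.1 < g₂ p.2} :=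
    measurableSet_lt measurable_fst (hg₂m.comp measurable_snd)
  have hE'm : MeasurableSet E' := by
    have heq : E' = ({p : ℝ × ℝ | p.1 < g₁ p.2} \ {p : ℝ × ℝ | p.1 < g₂ p.2}) ∪
        ({p : ℝ × ℝ | p.1 < g₂ p.2} \ {p : ℝ × ℝ | p.1 < g₁ p.2}) := by
      ext p; simp only [hE', mem_setOf_eq, mem_union, mem_diff, mem_setOf_eq]; tauto
    rw [heq]
    exact (hP₁.diff hP₂).union (hP₂.diff hP₁)
  have hN : ν {s : ℝ | ¬ (D₁ s = g₁ s ∧ D₂ s = g₂ s)} = 0 := by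
    have h := hg₁.and hg₂
    rwa [ae_iff] at h
  have hnull : (ν.prod ν) (Prod.snd ⁻¹' {s : ℝ | ¬ (D₁ s = g₁ s ∧ D₂ s = g₂ s)}) = 0 := by
    have heq : (Prod.snd ⁻¹' {s : ℝ | ¬ (D₁ s = g₁ s ∧ D₂ s = g₂ s)} : Set (ℝ × ℝ))
        = (univ : Set ℝ) ×ˢ {s : ℝ | ¬ (D₁ s = g₁ s ∧ D₂ s = g₂ s)} := by
      ext p; simp [Set.mem_prod]
    rw [heq, Measure.prod_prod, hN, mul_zero]
  have hFF' : (fun p : ℝ × ℝ => F p.1 p.2)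
      =ᵐ[ν.prod ν] E'.indicator (fun _ => (1:ℝ≥0∞)) := by
    rw [EventuallyEq, ae_iff]
    refine measure_mono_null (fun p hp => ?_) hnull
    simp only [mem_setOf_eq] at hp
    show p ∈ Prod.snd ⁻¹' {s : ℝ | ¬ (D₁ s = g₁ s ∧ D₂ s = g₂ s)}
    by_contra h
    simp only [mem_preimage, mem_setOf_eq, not_not] at h
    apply hp
    have hmem : (p.1, p.2) ∈ E ↔ p ∈ E' := by
      simp only [hE, hE', mem_setOf_eq, h.1, h.2]
    by_cases hpE : p ∈ E'
    · have h1 : F p.1 p.2 = (1:ℝ≥0∞) := indicator_of_mem (hmem.mpr hpE) _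
      rw [h1, indicator_of_mem hpE]
    · have h1 : F p.1 p.2 = (0:ℝ≥0∞) :=
        indicator_of_notMem (fun hc => hpE (hmem.mp hc)) _
      rw [h1, indicator_of_notMem hpE]
  have hFmeas : AEMeasurable (fun p : ℝ × ℝ => F p.1 p.2) (ν.prod ν) :=
    ⟨E'.indicator (fun _ => (1:ℝ≥0∞)), measurable_const.indicator hE'm, hFF'⟩
  -- slice in s, for fixed t > 0
  have step1 : ∀ t : ℝ, 0 < t → ∫⁻ s in Ioi (0:ℝ), F t s
      = ENNReal.ofReal |lam₁ t - lam₂ t| := by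
    intro t ht
    obtain ⟨hL₁0, hle₁, hge₁⟩ := stmt3_inv_facts hanti₁ hlim₁ ht
    obtain ⟨hL₂0, hle₂, hge₂⟩ := stmt3_inv_facts hanti₂ hlim₂ ht
    set L₁ : ℝ := sInf {s : ℝ | 0 < s ∧ D₁ s ≤ t} with hL₁
    set L₂ : ℝ := sInf {s : ℝ | 0 < s ∧ D₂ s ≤ t} with hL₂
    set S : Set ℝ := {s : ℝ | (t, s) ∈ E} with hS
    have hFS : ∀ s, F t s = S.indicator (fun _ => (1:ℝ≥0∞)) s := fun s => rfl
    have key : ∀ (s : ℝ), 0 < s → ((t < D₁ s → s ≤ L₁) ∧ (s < L₁ → t < D₁ s)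
        ∧ (t < D₂ s → s ≤ L₂) ∧ (s < L₂ → t < D₂ s)) := by
      intro s hs
      refine ⟨fun h => hge₁ s hs h, fun h => ?_, fun h => hge₂ s hs h, fun h => ?_⟩
      · by_contra hc; push_neg at hc; exact absurd (hle₁ s hs hc) (not_le.mpr h)
      · by_contra hc; push_neg at hc; exact absurd (hle₂ s hs hc) (not_le.mpr h)
    have hcalc : ∫⁻ s in Ioi (0:ℝ), S.indicator (fun _ => (1:ℝ≥0∞)) s
        = ENNReal.ofReal (max L₁ L₂ - min L₁ L₂) := by
      refine stmt3_squeeze (le_min hL₁0 hL₂0) (min_le_max) (fun s hs => ?_) (fun s hs => ?_)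
      · -- Ioo (min) (max) ⊆ S
        have hs0 : 0 < s := lt_of_le_of_lt (le_min hL₁0 hL₂0) hs.1
        obtain ⟨k1, k2, k3, k4⟩ := key s hs0
        simp only [hS, hE, mem_setOf_eq]
        rcases le_total L₁ L₂ with hLL | hLL
        · rw [min_eq_left hLL] at hs; rw [max_eq_right hLL] at hs
          have hd2 : t < D₂ s := k4 hs.2
          have hd1 : ¬ (t < D₁ s) := fun hc => absurd (k1 hc) (not_le.mpr hs.1)
          tauto
        · rw [min_eq_right hLL] at hs; rw [max_eq_left hLL] at hs
          have hd1 : t < D₁ s := k2 hs.2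
          have hd2 : ¬ (t < D₂ s) := fun hc => absurd (k3 hc) (not_le.mpr hs.1)
          tauto
      · -- S ∩ Ioi 0 ⊆ Icc
        obtain ⟨hsS, hs0⟩ := hs
        obtain ⟨k1, k2, k3, k4⟩ := key s hs0
        simp only [hS, hE, mem_setOf_eq] at hsS
        constructor
        · -- min ≤ s
          by_contra hc; push_neg at hc
          have h1 : t < D₁ s := k2 (lt_of_lt_of_le hc (min_le_left _ _))
          have h2 : t < D₂ s := k4 (lt_of_lt_of_le hc (min_le_right _ _))
          exact hsS ⟨fun _ => h2, fun _ => h1⟩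
        · -- s ≤ max
          by_cases h1 : t < D₁ s
          · exact le_trans (k1 h1) (le_max_left _ _)
          · have h2 : t < D₂ s := by tauto
            exact le_trans (k3 h2) (le_max_right _ _)
    rw [show (∫⁻ s in Ioi (0:ℝ), F t s) = ∫⁻ s in Ioi (0:ℝ),
        S.indicator (fun _ => (1:ℝ≥0∞)) s from rfl, hcalc,
      hlam₁ t ht, hlam₂ t ht, max_sub_min_eq_abs]
    rw [abs_sub_comm]
  -- slice in t, for fixed s > 0
  have step2 : ∀ s : ℝ, 0 < s → ∫⁻ t in Ioi (0:ℝ), F t s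
      = ENNReal.ofReal |D₁ s - D₂ s| := by
    intro s hs
    set c₁ : ℝ := D₁ s with hc₁
    set c₂ : ℝ := D₂ s with hc₂
    have hc₁0 : 0 ≤ c₁ := hpos₁ s hs
    have hc₂0 : 0 ≤ c₂ := hpos₂ s hs
    set S : Set ℝ := {t : ℝ | (t, s) ∈ E} with hS
    have hFS : ∀ t, F t s = S.indicator (fun _ => (1:ℝ≥0∞)) t := fun t => rfl
    have hcalc : ∫⁻ t in Ioi (0:ℝ), S.indicator (fun _ => (1:ℝ≥0∞)) t
        = ENNReal.ofReal (max c₁ c₂ - min c₁ c₂) := by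
      refine stmt3_squeeze (le_min hc₁0 hc₂0) (min_le_max) (fun t htm => ?_) (fun t htm => ?_)
      · simp only [hS, hE, mem_setOf_eq]
        rcases le_total c₁ c₂ with hcc | hcc
        · rw [min_eq_left hcc] at htm; rw [max_eq_right hcc] at htm
          have h2 : t < c₂ := htm.2
          have h1 : ¬ (t < c₁) := not_lt.mpr htm.1.le
          tauto
        · rw [min_eq_right hcc] at htm; rw [max_eq_left hcc] at htm
          have h1 : t < c₁ := htm.2
          have h2 : ¬ (t < c₂) := not_lt.mpr htm.1.le
          tauto
      · obtain ⟨htS, ht0⟩ := htm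
        simp only [hS, hE, mem_setOf_eq] at htS
        constructor
        · by_contra hc; push_neg at hc
          have h1 : t < c₁ := lt_of_lt_of_le hc (min_le_left _ _)
          have h2 : t < c₂ := lt_of_lt_of_le hc (min_le_right _ _)
          exact htS ⟨fun _ => h2, fun _ => h1⟩
        · by_cases h1 : t < c₁
          · have h2 : ¬ (t < c₂) := by tauto
            push_neg at h2
            exact le_trans h1.le (le_max_left _ _)
          · have h2 : t < c₂ := by tauto
            exact le_trans h2.le (le_max_right _ _)
    rw [show (∫⁻ t in Ioi (0:ℝ), F t s) = ∫⁻ t in Ioi (0:ℝ),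
        S.indicator (fun _ => (1:ℝ≥0∞)) t from rfl, hcalc, max_sub_min_eq_abs]
    rw [abs_sub_comm]
  calc ∫⁻ t in Ioi (0:ℝ), ENNReal.ofReal |lam₁ t - lam₂ t|
      = ∫⁻ t in Ioi (0:ℝ), ∫⁻ s in Ioi (0:ℝ), F t s :=
        setLIntegral_congr_fun measurableSet_Ioi
          (fun t ht => (step1 t ht).symm)
    _ = ∫⁻ s in Ioi (0:ℝ), ∫⁻ t in Ioi (0:ℝ), F t s := lintegral_lintegral_swap hFmeas
    _ = ∫⁻ s in Ioi (0:ℝ), ENNReal.ofReal |D₁ s - D₂ s| :=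
        setLIntegral_congr_fun measurableSet_Ioi
          (fun s hs => step2 s hs)
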